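/- ₄F₃(1/6, 1/3, 2/3, 5/6; 1/4, 1/2, 3/4; 729/1024) = 2·(2/(3√3+√59))^{1/3}/√59 + (3√6+√118)^{1/3}/√118 + 2·√((2/5)·(3√5/16 + 7/16)). -/

import Mathlib

noncomputable def poch (a : ℝ) (n : ℕ) : ℝ := ∏ i ∈ Finset.range n, (a + i)

open Polynomial Finset
open scoped NNReal ENNReal

noncomputable def G (x : ℝ) : ℝ := ∑' m : ℕ, ((3*m).choose m : ℝ) * x ^ m


open Polynomial Finset

lemma key_id (N : ℕ) :
    ∑ m ∈ range (N+1), ((3*m).choose N : ℤ) * ((-1)^(N-m) * (N.choose m)) = 3^N := by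
  have h1 : ((X + 1 : ℤ[X])^3 - 1) = X * (X^2 + 3*X + 3) := by ring
  have h2 : (((X + 1 : ℤ[X])^3 - 1)^N).coeff N = 3^N := by
    rw [h1, mul_pow]
    have := Polynomial.coeff_X_pow_mul ((X^2 + 3*X + 3 : ℤ[X])^N) N 0
    rw [zero_add] at this
    rw [this, Polynomial.coeff_zero_eq_eval_zero]
    simp
  have h3 : (((X + 1 : ℤ[X])^3 - 1)^N) =
      ∑ m ∈ range (N+1), (X+1)^(3*m) * Polynomial.C ((-1)^(N-m) * (N.choose m : ℤ)) := by
    rw [sub_eq_add_neg, add_pow]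
    refine Finset.sum_congr rfl fun m hm => ?_
    rw [← pow_mul]
    simp only [map_mul, map_pow, map_neg, map_one, map_natCast]
    ring
  rw [h3, Polynomial.finset_sum_coeff] at h2
  rw [← h2]
  refine Finset.sum_congr rfl fun m hm => ?_
  rw [Polynomial.coeff_mul_C, Polynomial.coeff_X_add_one_pow]

-- trinomial revision, real version
lemma rev (N m : ℕ) (hm : m ≤ N) :
    (((3*m).choose m : ℝ)) * ((2*m).choose (N-m)) = ((3*m).choose N) * (N.choose m) := by
  rcases le_or_gt N (3*m) with h | h
  · have e1 : (((3*m).choose m : ℝ)) = (3*m).factorial / (m.factorial * (2*m).factorial) := by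
      rw [Nat.cast_choose ℝ (by omega)]
      have : 3*m - m = 2*m := by omega
      rw [this]
    have e2 : (((2*m).choose (N-m) : ℝ)) =
        (2*m).factorial / ((N-m).factorial * (3*m-N).factorial) := by
      rw [Nat.cast_choose ℝ (by omega)]
      have : 2*m - (N-m) = 3*m - N := by omega
      rw [this]
    have e3 : (((3*m).choose N : ℝ)) = (3*m).factorial / (N.factorial * (3*m-N).factorial) := by
      rw [Nat.cast_choose ℝ (by omega)]
    have e4 : ((N.choose m : ℝ)) = N.factorial / (m.factorial * (N-m).factorial) := by
      rw [Nat.cast_choose ℝ (by omega)]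
    rw [e1, e2, e3, e4]
    have p1 := m.factorial_pos; have p2 := (2*m).factorial_pos
    have p3 := (N-m).factorial_pos; have p4 := (3*m-N).factorial_pos
    have p5 := N.factorial_pos
    field_simp
  · have z1 : (2*m).choose (N-m) = 0 := Nat.choose_eq_zero_of_lt (by omega)
    have z2 : (3*m).choose N = 0 := Nat.choose_eq_zero_of_lt (by omega)
    rw [z1, z2]
    simp

-- the finite identity, real version
lemma key_id_real (N : ℕ) :
    ∑ m ∈ range (N+1), ((3*m).choose m : ℝ) * ((2*m).choose (N-m)) * (-1)^(N-m) = 3^N := by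
  have := key_id N
  have h : ∑ m ∈ range (N+1), ((3*m).choose m : ℝ) * ((2*m).choose (N-m)) * (-1)^(N-m)
      = ∑ m ∈ range (N+1), ((3*m).choose N : ℝ) * ((-1)^(N-m) * (N.choose m)) := by
    refine Finset.sum_congr rfl fun m hm => ?_
    rw [Finset.mem_range] at hm
    rw [rev N m (by omega)]
    ring
  rw [h]
  have := congrArg (fun z : ℤ => (z : ℝ)) (key_id N)
  push_cast at this
  convert this using 2
open Finset

-- bound on central-type binomial
lemma choose_le_bound (m : ℕ) : (((3*m).choose m : ℝ)) ≤ (27/4)^m := by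
  have key : ((3*m).choose m : ℝ) * (1/3)^m * (2/3)^(2*m) ≤ 1 := by
    have hb : ((1:ℝ)/3 + 2/3)^(3*m) = ∑ k ∈ range (3*m+1), (1/3:ℝ)^k * (2/3)^(3*m-k) * ((3*m).choose k) := add_pow _ _ _
    have hm : m ∈ range (3*m+1) := by simp; omega
    have hnonneg : ∀ k ∈ range (3*m+1), (0:ℝ) ≤ (1/3:ℝ)^k * (2/3)^(3*m-k) * ((3*m).choose k) := by
      intro k _; positivity
    have hle := Finset.single_le_sum hnonneg hm
    rw [← hb] at hle
    norm_num at hle ⊢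
    calc ((3*m).choose m : ℝ) * (1/3)^m * (2/3)^(2*m)
        = (1/3:ℝ)^m * (2/3)^(3*m-m) * ((3*m).choose m) := by
          have : 3*m - m = 2*m := by omega
          rw [this]; ring
      _ ≤ 1 := by simpa using hle
  have h1 : (0:ℝ) < (1/3)^m * (2/3)^(2*m) := by positivity
  have h2 : ((3*m).choose m : ℝ) ≤ 1 / ((1/3)^m * (2/3)^(2*m)) := by
    rw [le_div_iff₀ h1]
    calc ((3*m).choose m : ℝ) * ((1/3)^m * (2/3)^(2*m))
        = ((3*m).choose m : ℝ) * (1/3)^m * (2/3)^(2*m) := by ring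
      _ ≤ 1 := key
  refine h2.trans (le_of_eq ?_)
  rw [pow_mul, one_div, ← mul_pow, ← inv_pow]
  norm_num

lemma summable_G {x : ℝ} (hx : |x| ≤ 7/50) :
    Summable (fun m : ℕ => ((3*m).choose m : ℝ) * x ^ m) := by
  refine Summable.of_norm ?_
  refine Summable.of_nonneg_of_le (fun m => norm_nonneg _) (fun m => ?_)
    (summable_geometric_of_lt_one (by norm_num) (by norm_num : (189/200:ℝ) < 1))
  have : ‖((3*m).choose m : ℝ) * x ^ m‖ = ((3*m).choose m : ℝ) * |x| ^ m := by
    rw [norm_mul, Real.norm_natCast, norm_pow, Real.norm_eq_abs]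
  rw [this]
  calc ((3*m).choose m : ℝ) * |x| ^ m ≤ (27/4)^m * (7/50)^m := by
        apply mul_le_mul (choose_le_bound m) (pow_le_pow_left₀ (abs_nonneg x) hx m)
          (by positivity) (by positivity)
    _ = (189/200:ℝ)^m := by rw [← mul_pow]; norm_num
open Finset




lemma small_s {s : ℝ} (hs : |s| ≤ 1/20) : (1 - 3*s) * G (s*(1-s)^2) = 1 := by
  set F : ℕ × ℕ → ℝ := fun p => ((3*p.1).choose p.1 : ℝ) * s^p.1 * (((2*p.1).choose p.2 : ℝ) * (-s)^p.2) with hF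
  -- row summability (finitely many nonzero)
  have hrow : ∀ m : ℕ, Summable fun j => F (m, j) := by
    intro m
    apply summable_of_ne_finset_zero (s := range (2*m+1))
    intro j hj
    rw [mem_range, not_lt] at hj
    have : (2*m).choose j = 0 := Nat.choose_eq_zero_of_lt (by omega)
    simp [hF, this]
  -- row sums
  have hrowsum : ∀ m : ℕ, ∑' j, F (m, j) = ((3*m).choose m : ℝ) * s^m * (1-s)^(2*m) := by
    intro m
    have : ∑' j, F (m, j) = ∑ j ∈ range (2*m+1), F (m, j) := by
      apply tsum_eq_sum
      intro j hj
      rw [mem_range, not_lt] at hj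
      have : (2*m).choose j = 0 := Nat.choose_eq_zero_of_lt (by omega)
      simp [hF, this]
    rw [this]
    have hb : ((1:ℝ) + (-s))^(2*m) = ∑ j ∈ range (2*m+1), (-s)^j * 1^(2*m-j) * ((2*m).choose j) :=
      add_pow (-s) 1 (2*m) ▸ (by rw [add_comm])
    simp only [one_pow, mul_one] at hb
    have h1 : ((1:ℝ) + -s) = 1 - s := by ring
    rw [h1] at hb
    calc ∑ j ∈ range (2*m+1), F (m, j)
        = ∑ j ∈ range (2*m+1), (((3*m).choose m : ℝ) * s^m) * ((-s)^j * ((2*m).choose j)) :=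
          Finset.sum_congr rfl (fun j _ => by simp only [hF]; ring)
      _ = (((3*m).choose m : ℝ) * s^m) * ∑ j ∈ range (2*m+1), ((-s)^j * ((2*m).choose j)) := by
          rw [Finset.mul_sum]
      _ = ((3*m).choose m : ℝ) * s^m * (1-s)^(2*m) := by rw [← hb]
  -- abs row bound and summability of F
  have habs : Summable fun p : ℕ × ℕ => |F p| := by
    rw [summable_prod_of_nonneg (fun p => abs_nonneg _)]
    constructor
    · intro m
      exact (hrow m).abs
    · have hb1 : ∀ m : ℕ, ∑' j, |F (m, j)| ≤ (27/4 * (1/20) * (21/20)^2)^m := by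
        intro m
        have : ∑' j, |F (m, j)| = ∑ j ∈ range (2*m+1), |F (m, j)| := by
          apply tsum_eq_sum
          intro j hj
          rw [mem_range, not_lt] at hj
          have : (2*m).choose j = 0 := Nat.choose_eq_zero_of_lt (by omega)
          simp [hF, this]
        rw [this]
        have hle : ∑ j ∈ range (2*m+1), |F (m, j)| ≤
            ((3*m).choose m : ℝ) * (1/20)^m * (21/20)^(2*m) := by
          have : ∀ j ∈ range (2*m+1), |F (m, j)| ≤
              ((3*m).choose m : ℝ) * (1/20)^m * (((2*m).choose j : ℝ) * (1/20)^j) := by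
            intro j _
            rw [hF]
            simp only [abs_mul, abs_pow, abs_neg, Nat.abs_cast]
            gcongr <;> exact hs
          refine (Finset.sum_le_sum this).trans ?_
          rw [← Finset.mul_sum]
          have hb2 : ∑ j ∈ range (2*m+1), (((2*m).choose j : ℝ) * (1/20)^j) = (21/20)^(2*m) := by
            have h := add_pow (1/20 : ℝ) 1 (2*m)
            simp only [one_pow, mul_one] at h
            have h120 : (1/20 + 1 : ℝ) = 21/20 := by norm_num
            rw [h120] at h
            rw [h]
            exact Finset.sum_congr rfl (fun j _ => by ring)
          rw [hb2]
        refine hle.trans ?_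
        calc ((3*m).choose m : ℝ) * (1/20)^m * (21/20)^(2*m)
            ≤ (27/4)^m * (1/20)^m * (21/20)^(2*m) := by
              gcongr; exact choose_le_bound m
          _ = (27/4 * (1/20) * (21/20)^2)^m := by
              rw [pow_mul, mul_pow, mul_pow]
      refine Summable.of_nonneg_of_le (fun m => tsum_nonneg (fun j => abs_nonneg _)) hb1 ?_
      exact summable_geometric_of_lt_one (by norm_num) (by norm_num)
  have hFsum : Summable F := habs.of_abs
  -- G value equals the double sum
  have hG : G (s*(1-s)^2) = ∑' p : ℕ × ℕ, F p := by
    rw [Summable.tsum_prod' hFsum hrow]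
    rw [G]
    apply tsum_congr
    intro m
    rw [hrowsum m]
    rw [mul_pow, ← pow_mul]
    ring
  -- regroup along antidiagonals
  have hsig : Summable fun x : Σ n : ℕ, antidiagonal n => F (x.2 : ℕ × ℕ) :=
    Finset.HasAntidiagonal.sigmaAntidiagonalEquivProd.summable_iff.mpr hFsum
  have hregroup : ∑' p : ℕ × ℕ, F p = ∑' N : ℕ, ∑ kl ∈ antidiagonal N, F kl := by
    conv_rhs => congr; ext; rw [← Finset.sum_finset_coe, ← tsum_fintype (L := .unconditional _)]
    rw [← Finset.HasAntidiagonal.sigmaAntidiagonalEquivProd.tsum_eq F]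
    exact hsig.tsum_sigma' (fun n => (hasSum_fintype _).summable)
  -- evaluate antidiagonal sums
  have hanti : ∀ N : ℕ, ∑ kl ∈ antidiagonal N, F kl = (3*s)^N := by
    intro N
    rw [Finset.Nat.sum_antidiagonal_eq_sum_range_succ_mk]
    have : ∀ m ∈ range (N+1), F (m, N - m) =
        (((3*m).choose m : ℝ) * ((2*m).choose (N-m)) * (-1)^(N-m)) * s^N := by
      intro m hm
      rw [mem_range] at hm
      have hpow : s^m * s^(N-m) = s^N := by rw [← pow_add]; congr 1; omega
      calc F (m, N - m)
          = ((3*m).choose m : ℝ) * s^m * (((2*m).choose (N-m) : ℝ) * ((-1)^(N-m) * s^(N-m))) := by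
            simp only [hF]; rw [neg_pow]
        _ = (((3*m).choose m : ℝ) * ((2*m).choose (N-m)) * (-1)^(N-m)) * (s^m * s^(N-m)) := by ring
        _ = (((3*m).choose m : ℝ) * ((2*m).choose (N-m)) * (-1)^(N-m)) * s^N := by rw [hpow]
    rw [Finset.sum_congr rfl this, ← Finset.sum_mul, key_id_real N, mul_pow]
  rw [hG, hregroup]
  have hgeom : ∑' N : ℕ, (3*s)^N = (1 - 3*s)⁻¹ := by
    apply tsum_geometric_of_abs_lt_one
    rw [abs_mul]
    calc |3| * |s| ≤ 3 * (1/20) := by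
          apply mul_le_mul (by norm_num) hs (abs_nonneg _) (by norm_num)
      _ < 1 := by norm_num
  rw [tsum_congr hanti, hgeom]
  have hs' := abs_le.mp hs
  have h3 : (0:ℝ) < 1 - 3*s := by linarith [hs'.1, hs'.2]
  rw [mul_inv_cancel₀ (ne_of_gt h3)]
open Finset
open scoped NNReal ENNReal


noncomputable def Gser : FormalMultilinearSeries ℝ ℝ ℝ :=
  FormalMultilinearSeries.ofScalars ℝ (fun m => ((3*m).choose m : ℝ))

lemma G_hasFP : HasFPowerSeriesOnBall G Gser 0 ((7/50 : ℝ≥0) : ℝ≥0∞) := by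
  constructor
  · apply FormalMultilinearSeries.le_radius_of_bound _ 1
    intro n
    have hn : ‖Gser n‖ = ((3*n).choose n : ℝ) := by
      rw [Gser, FormalMultilinearSeries.ofScalars_norm]
      simp
    rw [hn]
    calc ((3*n).choose n : ℝ) * (7/50 : ℝ≥0)^n ≤ (27/4)^n * (7/50)^n := by
          push_cast
          gcongr
          exact choose_le_bound n
      _ = (189/200 : ℝ)^n := by rw [← mul_pow]; norm_num
      _ ≤ 1 := pow_le_one₀ (by norm_num) (by norm_num)
  · norm_num
  · intro y hy
    rw [EMetric.mem_ball, edist_zero_right] at hy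
    have hy' : |y| < 7/50 := by
      rw [← Real.norm_eq_abs]
      exact_mod_cast hy
    have hsum := summable_G (le_of_lt hy')
    have : (fun n => Gser n fun _ => y) = fun n => ((3*n).choose n : ℝ) * y ^ n := by
      funext n
      rw [Gser, FormalMultilinearSeries.ofScalars_apply_eq, smul_eq_mul]
    rw [this, zero_add]
    exact hsum.hasSum

lemma G_analytic : AnalyticOnNhd ℝ G (Metric.ball (0:ℝ) (7/50)) := by
  intro y hy
  apply G_hasFP.analyticAt_of_mem
  rw [EMetric.mem_ball, edist_zero_right]
  rw [Metric.mem_ball, Real.dist_eq, sub_zero] at hy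
  exact_mod_cast (by rwa [← Real.norm_eq_abs] at hy : ‖y‖ < ((7/50:ℝ≥0):ℝ))

lemma cubic_G {t : ℝ} (ht : |t| ≤ 1/8) :
    (G t - 1) * (2 * G t + 1)^2 = 27 * t * (G t)^3 := by
  set U := Metric.ball (0:ℝ) (7/50) with hU
  have hUconn : IsPreconnected U := (convex_ball _ _).isPreconnected
  set Φ : ℝ → ℝ := fun x => (G x - 1) * (2 * G x + 1)^2 - 27 * x * (G x)^3 with hΦ
  have hΦan : AnalyticOnNhd ℝ Φ U := by
    apply AnalyticOnNhd.sub
    · exact ((G_analytic.sub analyticOnNhd_const).mul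
        (((analyticOnNhd_const.mul G_analytic).add analyticOnNhd_const).pow 2))
    · exact (analyticOnNhd_const.mul analyticOnNhd_id).mul (G_analytic.pow 3)
  have h0U : (0:ℝ) ∈ U := by simp [hU]
  have hev : Φ =ᶠ[nhds (0:ℝ)] (fun _ => 0) := by
    have hball : Metric.ball (0:ℝ) (361/8000) ∈ nhds (0:ℝ) := Metric.ball_mem_nhds _ (by norm_num)
    refine Filter.eventuallyEq_of_mem hball ?_
    intro x hx
    rw [Metric.mem_ball, Real.dist_eq, sub_zero] at hx
    -- find s with s(1-s)^2 = x
    have hcont : ContinuousOn (fun s : ℝ => s*(1-s)^2) (Set.Icc (-(1/20)) (1/20)) := by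
      fun_prop
    have hIVT := intermediate_value_Icc (by norm_num : (-(1/20):ℝ) ≤ 1/20) hcont
    have hxmem : x ∈ Set.Icc ((fun s : ℝ => s*(1-s)^2) (-(1/20))) ((fun s : ℝ => s*(1-s)^2) (1/20)) := by
      simp only
      constructor
      · norm_num
        cases' abs_lt.mp hx with h1 h2
        nlinarith
      · norm_num
        cases' abs_lt.mp hx with h1 h2
        nlinarith
    obtain ⟨s, hsmem, hsx⟩ := hIVT hxmem
    change s*(1-s)^2 = x at hsx
    have hs : |s| ≤ 1/20 := abs_le.mpr ⟨hsmem.1, hsmem.2⟩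
    have hkey := small_s hs
    rw [hsx] at hkey
    have hs3 : (1 - 3*s) ≠ 0 := by
      cases' abs_le.mp hs with h1 h2
      intro h; nlinarith
    have hGx : G x = (1 - 3*s)⁻¹ := by
      field_simp at hkey ⊢
      linarith [hkey]
    show Φ x = (fun _ => (0:ℝ)) x
    rw [hΦ]
    simp only
    rw [hGx, ← hsx]
    field_simp
    ring
  have := hΦan.eqOn_of_preconnected_of_eventuallyEq
    (analyticOnNhd_const : AnalyticOnNhd ℝ (fun _ => (0:ℝ)) U) hUconn h0U hev
  have htU : t ∈ U := by
    rw [hU, Metric.mem_ball, Real.dist_eq, sub_zero]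
    calc |t| ≤ 1/8 := ht
      _ < 7/50 := by norm_num
  have := this htU
  rw [hΦ] at this
  simp only at this
  linarith [this]
open Finset


lemma G_eighth : G (1/8) = (3 * Real.sqrt 5 + 5) / 5 := by
  set a := Real.sqrt 5 with ha'
  have ha : a^2 = 5 := Real.sq_sqrt (by norm_num)
  have hapos : 0 < a := Real.sqrt_pos.mpr (by norm_num)
  have ha2 : (2:ℝ) ≤ a := by nlinarith
  set g := G (1/8) with hg'
  have hcub := cubic_G (t := 1/8) (abs_le.mpr ⟨by norm_num, by norm_num⟩)
  have hcub' : 5*g^3 - 24*g - 8 = 0 := by linear_combination 8 * hcub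
  have hg1 : (1:ℝ) ≤ g := by
    rw [hg', G]
    have h0 : ((3*0).choose 0 : ℝ) * (1/8:ℝ)^0 = 1 := by norm_num
    calc (1:ℝ) = ((3*0).choose 0 : ℝ) * (1/8:ℝ)^0 := h0.symm
      _ ≤ ∑' m : ℕ, ((3*m).choose m : ℝ) * (1/8:ℝ)^m := by
          apply Summable.le_tsum (summable_G (abs_le.mpr ⟨by norm_num, by norm_num⟩)) 0
          intro j _
          positivity
  set gh := (3*a+5)/5 with hgh'
  have hgh : 5*gh^3 - 24*gh - 8 = 0 := by
    rw [hgh']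
    linear_combination ((27*a + 135)/25) * ha
  have hfac : (g - gh) * (5*(g^2 + g*gh + gh^2) - 24) = 0 := by
    linear_combination hcub' - hgh
  have hgh2 : (2:ℝ) ≤ gh := by rw [hgh']; nlinarith
  have hpos : 5*(g^2 + g*gh + gh^2) - 24 > 0 := by nlinarith
  have := mul_eq_zero.mp hfac
  rcases this with h | h
  · linarith [sub_eq_zero.mp h]
  · linarith

lemma G_neg_eighth_cubic : 59 * (G (-(1/8)))^3 - 24 * (G (-(1/8))) - 8 = 0 := by
  have hcub := cubic_G (t := -(1/8)) (abs_le.mpr ⟨by norm_num, by norm_num⟩)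
  linear_combination 8 * hcub
open Finset


lemma G_neg_eighth : G (-(1/8)) =
    (4 * (2 / (3 * Real.sqrt 3 + Real.sqrt 59)) ^ ((1:ℝ)/3)
      + 2 / (2 / (3 * Real.sqrt 3 + Real.sqrt 59)) ^ ((1:ℝ)/3)) / Real.sqrt 59 := by
  set a := Real.sqrt 3 with ha'
  set b := Real.sqrt 59 with hb'
  have ha : a^2 = 3 := Real.sq_sqrt (by norm_num)
  have hb : b^2 = 59 := Real.sq_sqrt (by norm_num)
  have hapos : 0 < a := Real.sqrt_pos.mpr (by norm_num)
  have hbpos : 0 < b := Real.sqrt_pos.mpr (by norm_num)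
  have hdenpos : 0 < 3*a + b := by linarith
  have hbase : (0:ℝ) < 2 / (3*a + b) := by positivity
  set c := (2 / (3*a + b)) ^ ((1:ℝ)/3) with hc'
  have hcpos : 0 < c := Real.rpow_pos_of_pos hbase _
  have hc3' : c^(3:ℕ) = 2 / (3*a+b) := by
    rw [hc', ← Real.rpow_natCast ((2 / (3*a + b)) ^ ((1:ℝ)/3)) 3, ← Real.rpow_mul (le_of_lt hbase)]
    norm_num
  have hba : 3*a < b := by nlinarith
  have hc : c^3 = (b - 3*a)/16 := by
    rw [hc3']
    rw [div_eq_div_iff (by linarith) (by norm_num)]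
    linear_combination 9*ha - hb
  set v := (4*c + 2/c)/b with hv'
  -- v satisfies the cubic
  have h1 : (4*c + 2/c)^3 - 24*(4*c+2/c) = 64*c^3 + 8/c^3 := by
    field_simp
    ring
  have h2 : (64:ℝ)*c^3 = 4*(b - 3*a) := by rw [hc]; ring
  have h3 : (8:ℝ)/c^3 = 4*(b + 3*a) := by
    rw [hc]
    rw [div_eq_iff (ne_of_gt (by linarith : (0:ℝ) < (b-3*a)/16))]
    linear_combination (9/4)*ha - (1/4)*hb
  have hkey : (4*c + 2/c)^3 - 24*(4*c+2/c) = 8*b := by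
    rw [h1, h2, h3]; ring
  have hbne : b ≠ 0 := ne_of_gt hbpos
  have hcne0 : c ≠ 0 := ne_of_gt hcpos
  have hvb : v * b = 4*c + 2/c := by rw [hv']; field_simp
  have hb3 : b^3 = 59*b := by linear_combination b*hb
  have hvc : 59 * v^3 - 24*v - 8 = 0 := by
    have hz2 : (59*v^3 - 24*v - 8) * b^3 = 0 := by
      calc (59*v^3 - 24*v - 8) * b^3 = 59*(v*b)^3 - 24*(v*b)*b^2 - 8*b^3 := by ring
        _ = 59*(4*c+2/c)^3 - 24*(4*c+2/c)*59 - 8*(59*b) := by rw [hvb, hb, hb3]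
        _ = 0 := by linear_combination 59*hkey
    have hb3ne : b^3 ≠ 0 := pow_ne_zero _ hbne
    exact (mul_eq_zero.mp hz2).resolve_right hb3ne
  -- uniqueness of the real root
  set w := G (-(1/8)) with hw'
  have hGc := G_neg_eighth_cubic
  rw [← hw'] at hGc
  clear_value a b c v w
  have hfac : (w - v) * (59*(w^2 + w*v + v^2) - 24) = 0 := by
    linear_combination hGc - hvc
  have hvbc : v * b * c = 4*c^2 + 2 := by
    rw [hvb]
    field_simp
  have hvsq : 59*v^2*c^2 = (4*c^2+2)^2 := by
    linear_combination (v*b*c + (4*c^2+2))*hvbc - v^2*c^2*hb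
  have hcne : 2*c^2 - 1 ≠ 0 := by
    intro h
    have hc2 : c^2 = 1/2 := by linarith
    have h6 : ((b-3*a)/16)^2 = 1/8 := by
      calc ((b-3*a)/16)^2 = (c^3)^2 := by rw [hc]
        _ = (c^2)^3 := by ring
        _ = 1/8 := by rw [hc2]; norm_num
    have h7 : (b-3*a)^2 = 32 := by linear_combination 256*h6
    have hab : a*b = 9 := by linear_combination (1/6)*hb + (3/2)*ha - (1/6)*h7
    have h81 : a^2*b^2 = 81 := by linear_combination (a*b+9)*hab
    have h177 : a^2*b^2 = 177 := by linear_combination b^2*ha + 3*hb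
    linarith
  have hv2 : 177*v^2 > 96 := by
    have h177 : 177*v^2*c^2 - 96*c^2 = 12*(2*c^2-1)^2 := by linear_combination 3*hvsq
    nlinarith [mul_self_pos.mpr hcne, sq_nonneg c, hcpos, h177]
  have hpos : 59*(w^2 + w*v + v^2) - 24 > 0 := by nlinarith [sq_nonneg (2*w+v), hv2]
  have := (mul_eq_zero.mp hfac).resolve_right (ne_of_gt hpos)
  have hwv : w = v := by linarith [sub_eq_zero.mp this]
  exact hwv
open Finset


lemma poch_succ (a : ℝ) (n : ℕ) : poch a (n+1) = poch a n * (a + n) := Finset.prod_range_succ _ _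

lemma poch_pos {a : ℝ} (ha : 0 < a) (n : ℕ) : 0 < poch a n :=
  Finset.prod_pos fun i _ => by positivity

lemma poch_one (n : ℕ) : poch 1 n = n.factorial := by
  induction n with
  | zero => simp [poch]
  | succ n ih => rw [poch_succ, ih, Nat.factorial_succ]; push_cast; ring

lemma hC (n : ℕ) : poch (1/2) n * poch 1 n * ((2:ℝ)^n)^2 = (2*n).factorial := by
  induction n with
  | zero => simp [poch]
  | succ n ih =>
    have h : 2*(n+1) = (2*n+1)+1 := by ring
    rw [h, Nat.factorial_succ, Nat.factorial_succ, poch_succ, poch_succ]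
    push_cast
    linear_combination (4*((1:ℝ)/2+n)*(1+n))*ih

lemma hB (n : ℕ) : poch (1/4) n * poch (1/2) n * poch (3/4) n * poch 1 n * ((2:ℝ)^n)^8
    = (4*n).factorial := by
  induction n with
  | zero => simp [poch]
  | succ n ih =>
    have h : 4*(n+1) = (4*n+1)+1+1+1 := by ring
    rw [h, Nat.factorial_succ, Nat.factorial_succ, Nat.factorial_succ, Nat.factorial_succ,
      poch_succ, poch_succ, poch_succ, poch_succ]
    push_cast
    linear_combination (256*((1:ℝ)/4+n)*(1/2+n)*(3/4+n)*(1+n))*ih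

lemma hA (n : ℕ) : poch (1/6) n * poch (1/3) n * poch (1/2) n * poch (2/3) n * poch (5/6) n
    * poch 1 n * (((2:ℝ)^n)^6 * ((3:ℝ)^n)^6) = (6*n).factorial := by
  induction n with
  | zero => simp [poch]
  | succ n ih =>
    have h : 6*(n+1) = (6*n+1)+1+1+1+1+1 := by ring
    rw [h, Nat.factorial_succ, Nat.factorial_succ, Nat.factorial_succ, Nat.factorial_succ,
      Nat.factorial_succ, Nat.factorial_succ,
      poch_succ, poch_succ, poch_succ, poch_succ, poch_succ, poch_succ]
    push_cast
    linear_combination (46656*((1:ℝ)/6+n)*(1/3+n)*(1/2+n)*(2/3+n)*(5/6+n)*(1+n))*ih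

lemma term_eq (n : ℕ) :
    poch (1/6) n * poch (1/3) n * poch (2/3) n * poch (5/6) n
      / (poch (1/4) n * poch (1/2) n * poch (3/4) n * (Nat.factorial n : ℝ))
      * (729/1024 : ℝ) ^ n
    = ((6*n).choose (2*n) : ℝ) * ((1/8 : ℝ)^2) ^ n := by
  have p16 := poch_pos (by norm_num : (0:ℝ) < 1/6) n
  have p13 := poch_pos (by norm_num : (0:ℝ) < 1/3) n
  have p12 := poch_pos (by norm_num : (0:ℝ) < 1/2) n
  have p23 := poch_pos (by norm_num : (0:ℝ) < 2/3) n
  have p56 := poch_pos (by norm_num : (0:ℝ) < 5/6) n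
  have p14 := poch_pos (by norm_num : (0:ℝ) < 1/4) n
  have p34 := poch_pos (by norm_num : (0:ℝ) < 3/4) n
  have pf : (0:ℝ) < (Nat.factorial n : ℝ) := by exact_mod_cast n.factorial_pos
  have hch : ((6*n).choose (2*n) : ℝ) * ((2*n).factorial : ℝ) * ((4*n).factorial : ℝ)
      = ((6*n).factorial : ℝ) := by
    have h := Nat.choose_mul_factorial_mul_factorial (show 2*n ≤ 6*n by omega)
    have h2 : 6*n - 2*n = 4*n := by omega
    rw [h2] at h
    exact_mod_cast h
  have hA' := hA n
  have hB' := hB n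
  have hC' := hC n
  have hD := poch_one n
  set x := (2:ℝ)^n with hx
  set y := (3:ℝ)^n with hy
  have hxpos : 0 < x := by positivity
  have hypos : 0 < y := by positivity
  have hpow1 : (729/1024 : ℝ)^n = y^6 / x^10 := by
    rw [div_pow, hx, hy, ← pow_mul, ← pow_mul, mul_comm n 6, mul_comm n 10, pow_mul, pow_mul]
    norm_num
  have h64 : x^6 = (64:ℝ)^n := by
    rw [hx, ← pow_mul, mul_comm n 6, pow_mul]; norm_num
  have hpow2 : (((1:ℝ)/8)^2)^n = (x^6)⁻¹ := by
    rw [h64, ← inv_pow]; norm_num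
  rw [hpow1, hpow2, ← div_eq_mul_inv, div_mul_div_comm,
    div_eq_div_iff (by positivity) (by positivity)]
  rw [hD] at hA' hB' hC'
  apply mul_left_cancel₀ (show poch (1/2) n * (n.factorial:ℝ) ≠ 0 by positivity)
  linear_combination hA' - hch
    - (((6*n).choose (2*n) : ℝ) * ((4*n).factorial : ℝ)) * hC'
    - (((6*n).choose (2*n) : ℝ) * poch (1/2) n * (n.factorial:ℝ) * x^2) * hB'
open Finset



theorem fourF3_algebraic_value :
    ∑' n : ℕ,
        poch (1/6) n * poch (1/3) n * poch (2/3) n * poch (5/6) n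
          / (poch (1/4) n * poch (1/2) n * poch (3/4) n * (Nat.factorial n))
          * (729/1024 : ℝ) ^ n =
      2 * (2 / (3 * Real.sqrt 3 + Real.sqrt 59)) ^ ((1:ℝ)/3) / Real.sqrt 59
        + (3 * Real.sqrt 6 + Real.sqrt 118) ^ ((1:ℝ)/3) / Real.sqrt 118
        + 2 * Real.sqrt ((2/5) * (3 * Real.sqrt 5 / 16 + 7/16)) := by
  classical
  set f : ℕ → ℝ := fun m =>
    (((3*m).choose m : ℝ) * (1/8:ℝ)^m + ((3*m).choose m : ℝ) * (-(1/8):ℝ)^m)/2 with hf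
  have hs1 : Summable (fun m : ℕ => ((3*m).choose m : ℝ) * (1/8:ℝ)^m) :=
    summable_G (by rw [abs_of_nonneg] <;> norm_num)
  have hs2 : Summable (fun m : ℕ => ((3*m).choose m : ℝ) * (-(1/8):ℝ)^m) :=
    summable_G (by rw [abs_of_nonpos] <;> norm_num)
  have hsf : Summable f := ((hs1.add hs2).div_const 2)
  -- f at even indices
  have hfe : ∀ k : ℕ, f (2*k) = ((6*k).choose (2*k) : ℝ) * ((1/8:ℝ)^2)^k := by
    intro k
    have h1 : 3*(2*k) = 6*k := by ring
    have h2 : ((-(1/8):ℝ))^(2*k) = ((1/8:ℝ))^(2*k) := by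
      rw [show ((-(1/8):ℝ)) = -(1/8) from rfl, neg_pow, Even.neg_one_pow ⟨k, by ring⟩, one_mul]
    have h3 : ((1/8:ℝ))^(2*k) = ((1/8:ℝ)^2)^k := by rw [← pow_mul]
    rw [hf]
    simp only [h1, h2, h3]
    ring
  have hfo : ∀ k : ℕ, f (2*k+1) = 0 := by
    intro k
    have h2 : ((-(1/8):ℝ))^(2*k+1) = -((1/8:ℝ))^(2*k+1) := Odd.neg_pow ⟨k, by ring⟩ _
    rw [hf]
    simp only [h2]
    ring
  -- even/odd split
  have hse : Summable (fun k : ℕ => f (2*k)) := hsf.comp_injective (fun a b => by omega)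
  have hso : Summable (fun k : ℕ => f (2*k+1)) := hsf.comp_injective (fun a b => by omega)
  have hsplit := tsum_even_add_odd hse hso
  have hzero : ∑' k : ℕ, f (2*k+1) = 0 := by
    rw [tsum_congr hfo]; exact tsum_zero
  -- LHS equals tsum of f(2k)
  have hL : ∑' n : ℕ,
      poch (1/6) n * poch (1/3) n * poch (2/3) n * poch (5/6) n
        / (poch (1/4) n * poch (1/2) n * poch (3/4) n * (Nat.factorial n))
        * (729/1024 : ℝ) ^ n = ∑' k : ℕ, f (2*k) := by
    apply tsum_congr
    intro n
    rw [term_eq n, hfe n]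
  have hF : ∑' m : ℕ, f m = (G (1/8) + G (-(1/8)))/2 := by
    have h0 : ∑' m : ℕ, f m
        = (∑' m : ℕ, (((3*m).choose m : ℝ) * (1/8:ℝ)^m
            + ((3*m).choose m : ℝ) * (-(1/8):ℝ)^m))/2 := tsum_div_const
    rw [h0, Summable.tsum_add hs1 hs2, G, G]
  have heven : ∑' k : ℕ, f (2*k) = ∑' m : ℕ, f m := by
    rw [← hsplit, hzero, add_zero]
  rw [hL, heven, hF, G_eighth, G_neg_eighth]
  -- now pure algebra
  set a5 := Real.sqrt 5 with ha5'
  set sa := Real.sqrt 3 with hsa'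
  set b := Real.sqrt 59 with hb'
  set s2 := Real.sqrt 2 with hs2'
  have h5 : a5^2 = 5 := Real.sq_sqrt (by norm_num)
  have ha : sa^2 = 3 := Real.sq_sqrt (by norm_num)
  have hb : b^2 = 59 := Real.sq_sqrt (by norm_num)
  have h2 : s2^2 = 2 := Real.sq_sqrt (by norm_num)
  have ha5pos : 0 < a5 := Real.sqrt_pos.mpr (by norm_num)
  have hapos : 0 < sa := Real.sqrt_pos.mpr (by norm_num)
  have hbpos : 0 < b := Real.sqrt_pos.mpr (by norm_num)
  have hs2pos : 0 < s2 := Real.sqrt_pos.mpr (by norm_num)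
  have h118 : Real.sqrt 118 = s2 * b := by
    rw [hs2', hb', ← Real.sqrt_mul (by norm_num)]; norm_num
  have h6 : Real.sqrt 6 = s2 * sa := by
    rw [hs2', hsa', ← Real.sqrt_mul (by norm_num)]; norm_num
  have hdenpos : 0 < 3*sa + b := by linarith
  have hbase : (0:ℝ) < 2 / (3*sa + b) := by positivity
  set c := (2 / (3*sa + b)) ^ ((1:ℝ)/3) with hc'
  have hcpos : 0 < c := Real.rpow_pos_of_pos hbase _
  have hc3' : c^(3:ℕ) = 2 / (3*sa+b) := by
    rw [hc', ← Real.rpow_natCast ((2 / (3*sa + b)) ^ ((1:ℝ)/3)) 3,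
      ← Real.rpow_mul (le_of_lt hbase)]
    norm_num
  have hba : 3*sa < b := by nlinarith
  have hc : c^3 = (b - 3*sa)/16 := by
    rw [hc3', div_eq_div_iff (by linarith) (by norm_num)]
    linear_combination 9*ha - hb
  -- the second cube root
  set c2 := (3 * Real.sqrt 6 + Real.sqrt 118) ^ ((1:ℝ)/3) with hc2'
  have hc2basepos : (0:ℝ) < 3 * Real.sqrt 6 + Real.sqrt 118 := by
    rw [h118, h6]; positivity
  have hc2pos : 0 < c2 := Real.rpow_pos_of_pos hc2basepos _
  have hc2cube : c2^(3:ℕ) = 3 * Real.sqrt 6 + Real.sqrt 118 := by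
    rw [hc2', ← Real.rpow_natCast ((3 * Real.sqrt 6 + Real.sqrt 118) ^ ((1:ℝ)/3)) 3,
      ← Real.rpow_mul (le_of_lt hc2basepos)]
    norm_num
  have hcube_eq : c2^(3:ℕ) = (s2/c)^(3:ℕ) := by
    rw [hc2cube, h118, h6]
    have : (s2/c)^(3:ℕ) = s2^3 / c^3 := by rw [div_pow]
    rw [this, hc]
    rw [eq_div_iff (ne_of_gt (by linarith : (0:ℝ) < (b-3*sa)/16))]
    linear_combination (s2/16)*hb - (9*s2/16)*ha - s2*h2
  have hc2v : c2 = s2/c := by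
    have hmono := pow_left_strictMonoOn₀ (M₀ := ℝ) (n := 3) (by norm_num)
    exact hmono.injOn (Set.mem_setOf.mpr (le_of_lt hc2pos))
      (Set.mem_setOf.mpr (by positivity)) hcube_eq
  rw [hc2v, h118]
  have hcne : c ≠ 0 := ne_of_gt hcpos
  have hbne : b ≠ 0 := ne_of_gt hbpos
  have hs2ne : s2 ≠ 0 := ne_of_gt hs2pos
  -- sqrt term
  have harg : (2/5)*(3*a5/16+7/16) = ((3*a5+5)/20)^2 := by
    linear_combination (-9/400)*h5
  have hsq : Real.sqrt ((2/5)*(3*a5/16+7/16)) = (3*a5+5)/20 := by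
    rw [harg, Real.sqrt_sq (by positivity)]
  rw [hsq]
  field_simp
  ring
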